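/- An optimal ordering exists for greedy-consistent functions: if G:2^{[n]} → ℝ is monotone and submodular with G(∅) = 0, and the permutation r is produced by the greedy algorithm (r_j maximizes the marginal gain given {r₁,…,r_{j−1}}), then for every k, G({r₁,…,r_k}) ≥ (1 − 1/e) · max_{|S| = k} G(S). -/

import Mathlib

private lemma sub_sum_bound {n : ℕ} (G : Finset (Fin n) → ℝ)
    (hmono : ∀ S T : Finset (Fin n), S ⊆ T → G S ≤ G T)
    (hsub : ∀ S T : Finset (Fin n), S ⊆ T → ∀ x ∉ T,
      G (insert x S) - G S ≥ G (insert x T) - G T)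
    (B : Finset (Fin n)) (S : Finset (Fin n)) :
    G (S ∪ B) - G B ≤ ∑ x ∈ S, (G (insert x B) - G B) := by
  induction S using Finset.induction_on with
  | empty => simp
  | @insert a s ha ih =>
    rw [Finset.insert_union, Finset.sum_insert ha]
    have h1 : G (insert a (s ∪ B)) - G (s ∪ B) ≤ G (insert a B) - G B := by
      by_cases hab : a ∈ s ∪ B
      · rw [Finset.insert_eq_self.2 hab]
        have := hmono B (insert a B) (Finset.subset_insert _ _)
        linarith
      · exact hsub B (s ∪ B) Finset.subset_union_right a hab
    linarith

theorem stmt_14 {n : ℕ} (G : Finset (Fin n) → ℝ)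
    (hmono : ∀ S T : Finset (Fin n), S ⊆ T → G S ≤ G T)
    (hsub : ∀ S T : Finset (Fin n), S ⊆ T → ∀ x ∉ T,
      G (insert x S) - G S ≥ G (insert x T) - G T)
    (h0 : G ∅ = 0) (r : Equiv.Perm (Fin n))
    (hgreedy : ∀ j : Fin n, ∀ x : Fin n,
      G (insert (r j) ((Finset.univ.filter fun j' : Fin n => j' < j).image r)) -
          G ((Finset.univ.filter fun j' : Fin n => j' < j).image r) ≥
        G (insert x ((Finset.univ.filter fun j' : Fin n => j' < j).image r)) -
          G ((Finset.univ.filter fun j' : Fin n => j' < j).image r)) :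
    ∀ k : ℕ, k ≤ n → ∀ S : Finset (Fin n), S.card = k →
      G ((Finset.univ.filter fun j : Fin n => (j : ℕ) < k).image r) ≥
        (1 - (Real.exp 1)⁻¹) * G S := by
  intro k hk S hS
  set A : ℕ → Finset (Fin n) := fun i => (Finset.univ.filter fun j : Fin n => (j : ℕ) < i).image r with hA
  show G (A k) ≥ (1 - (Real.exp 1)⁻¹) * G S
  have hA0 : A 0 = ∅ := by simp [hA]
  have hGS0 : 0 ≤ G S := by
    have := hmono ∅ S (Finset.empty_subset S); linarith
  rcases Nat.eq_zero_or_pos k with hk0 | hkpos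
  · subst hk0
    rw [Finset.card_eq_zero.1 hS, hA0, h0]
    simp
  -- A (i+1) = insert (r ⟨i⟩) (A i)
  have hstep : ∀ i (hi : i < n), A (i + 1) = insert (r ⟨i, hi⟩) (A i) := by
    intro i hi
    have : (Finset.univ.filter fun j : Fin n => (j : ℕ) < i + 1)
        = insert (⟨i, hi⟩ : Fin n) (Finset.univ.filter fun j : Fin n => (j : ℕ) < i) := by
      ext j
      simp [Nat.lt_succ_iff_lt_or_eq, Fin.ext_iff, or_comm]
      exact Nat.le_iff_lt_or_eq.trans or_comm
    simp only [hA, this, Finset.image_insert]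
  -- greedy gain lemma
  have hgain : ∀ i (hi : i < n) (x : Fin n),
      G (A (i + 1)) - G (A i) ≥ G (insert x (A i)) - G (A i) := by
    intro i hi x
    have hfilt : (Finset.univ.filter fun j' : Fin n => j' < (⟨i, hi⟩ : Fin n)).image r = A i := by
      simp [hA, Fin.lt_def]
    have := hgreedy ⟨i, hi⟩ x
    rw [hfilt] at this
    rw [hstep i hi]
    exact this
  set kr : ℝ := (k : ℝ) with hkr
  have hkr1 : (1 : ℝ) ≤ kr := by rw [hkr]; exact_mod_cast hkpos
  have hkr0 : (0 : ℝ) < kr := by linarith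
  have hq0 : (0 : ℝ) ≤ 1 - 1 / kr := by
    rw [sub_nonneg, div_le_one hkr0]; linarith
  -- one-step decay
  have hdecay : ∀ i, i < k → G S - G (A (i + 1)) ≤ (1 - 1 / kr) * (G S - G (A i)) := by
    intro i hik
    have hi : i < n := lt_of_lt_of_le hik hk
    have h1 : G S ≤ G (S ∪ A i) := hmono _ _ Finset.subset_union_left
    have h2 := sub_sum_bound G hmono hsub (A i) S
    have h3 : ∑ x ∈ S, (G (insert x (A i)) - G (A i))
        ≤ ∑ _x ∈ S, (G (A (i + 1)) - G (A i)) :=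
      Finset.sum_le_sum fun x _ => hgain i hi x
    have h4 : ∑ _x ∈ S, (G (A (i + 1)) - G (A i)) = kr * (G (A (i + 1)) - G (A i)) := by
      rw [Finset.sum_const, hS]; simp [hkr]
    have h5 : G S - G (A i) ≤ kr * (G (A (i + 1)) - G (A i)) := by
      rw [← h4]; linarith
    have h6 : (G S - G (A i)) / kr ≤ G (A (i + 1)) - G (A i) := by
      rw [div_le_iff₀ hkr0]; linarith [mul_comm (G (A (i+1)) - G (A i)) kr]
    have : (1 - 1 / kr) * (G S - G (A i)) = (G S - G (A i)) - (G S - G (A i)) / kr := by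
      field_simp
    rw [this]
    linarith
  -- iterate
  have hiter : ∀ i, i ≤ k → G S - G (A i) ≤ (1 - 1 / kr) ^ i * G S := by
    intro i
    induction i with
    | zero => intro _; rw [hA0, h0]; simp
    | succ i ih =>
      intro hik
      have hik' : i < k := hik
      have h1 := hdecay i hik'
      have h2 := ih (le_of_lt hik')
      have h3 : (1 - 1 / kr) * (G S - G (A i)) ≤ (1 - 1 / kr) * ((1 - 1 / kr) ^ i * G S) :=
        mul_le_mul_of_nonneg_left h2 hq0
      rw [pow_succ]
      calc G S - G (A (i + 1)) ≤ (1 - 1 / kr) * (G S - G (A i)) := h1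
        _ ≤ (1 - 1 / kr) * ((1 - 1 / kr) ^ i * G S) := h3
        _ = (1 - 1 / kr) ^ i * (1 - 1 / kr) * G S := by ring
  have hfin := hiter k le_rfl
  -- (1 - 1/k)^k ≤ exp(-1)
  have hexp : (1 - 1 / kr) ^ k ≤ (Real.exp 1)⁻¹ := by
    have h1 : 1 - 1 / kr ≤ Real.exp (-(1 / kr)) := by
      have := Real.add_one_le_exp (-(1 / kr)); linarith
    have h2 : (1 - 1 / kr) ^ k ≤ Real.exp (-(1 / kr)) ^ k :=
      pow_le_pow_left₀ hq0 h1 k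
    have h3 : Real.exp (-(1 / kr)) ^ k = Real.exp ((k : ℝ) * (-(1 / kr))) :=
      (Real.exp_nat_mul _ k).symm
    have h4 : (k : ℝ) * (-(1 / kr)) = -1 := by
      field_simp [hkr]
      simp [hkr]
    rw [h3, h4, Real.exp_neg] at h2
    exact h2
  have : (1 - 1 / kr) ^ k * G S ≤ (Real.exp 1)⁻¹ * G S :=
    mul_le_mul_of_nonneg_right hexp hGS0
  linarith
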